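/- Let T, m, λ, μ be real numbers with 0 < T ≤ 1, m ≥ 1, λ ≥ 1, μ ≥ 1, set σ = λμ²e^{μ(6m−4)} and γ(t) = 1 + (1 − 4t/T)^σ for t ∈ [0, T/4). Then for every t ∈ [0, T/4) and every b ∈ [0,1]: the second derivative of γ at t equals (16σ(σ−1)/T²)(1 − 4t/T)^{σ−2}, it is nonnegative, and λ·γ″(t)·(μ·e^{μ(6m+6)} − e^{μ(6m+b)}) ≤ (8/T²)·λ³·μ²·(γ(t)·e^{μ(6m+b)})³. -/
import Mathlib

/-- `2 μ³ ≤ e^{2μ}` for `μ ≥ 1`. -/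
lemma two_mu_cubed_le_exp (mu : ℝ) (hmu : 1 ≤ mu) :
    2 * mu ^ 3 ≤ Real.exp (2 * mu) := by
  have h0 : (0 : ℝ) ≤ 2 * mu := by linarith
  have h := Real.sum_le_exp_of_nonneg h0 5
  simp only [Finset.sum_range_succ, Finset.sum_range_zero] at h
  norm_num [Nat.factorial] at h
  have hmu0 : (0 : ℝ) ≤ mu := by linarith
  nlinarith [mul_nonneg (mul_nonneg (mul_nonneg hmu0 hmu0) hmu0) (sub_nonneg.2 hmu),
    sq_nonneg mu]

set_option maxHeartbeats 1600000 in
/-- The estimate `|ℓ_tt| ≤ Cλ³μ²ξ³` on `(0, T/4)` for the initial piece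
`γ(t) = 1 + (1 - 4t/T)^σ` of the time weight, with `σ = λμ²e^{μ(6m-4)}`. -/
theorem stmt4 (T m lam mu σ : ℝ) (hT0 : 0 < T) (hT1 : T ≤ 1) (hm : 1 ≤ m)
    (hlam : 1 ≤ lam) (hmu : 1 ≤ mu)
    (hσ : σ = lam * mu ^ 2 * Real.exp (mu * (6 * m - 4)))
    (γ : ℝ → ℝ) (hγ : ∀ t, γ t = 1 + (1 - 4 * t / T) ^ σ) :
    ∀ t ∈ Set.Ico (0 : ℝ) (T / 4), ∀ b ∈ Set.Icc (0 : ℝ) 1,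
      deriv (deriv γ) t = 16 * σ * (σ - 1) / T ^ 2 * (1 - 4 * t / T) ^ (σ - 2) ∧
      0 ≤ deriv (deriv γ) t ∧
      lam * deriv (deriv γ) t *
          (mu * Real.exp (mu * (6 * m + 6)) - Real.exp (mu * (6 * m + b)))
        ≤ 8 / T ^ 2 * lam ^ 3 * mu ^ 2 * (γ t * Real.exp (mu * (6 * m + b))) ^ 3 := by
  have hγ' : γ = fun t => 1 + (1 - 4 * t / T) ^ σ := funext hγ
  subst hγ'
  have hlam0 : (0 : ℝ) < lam := by linarith
  have hmu0 : (0 : ℝ) < mu := by linarith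
  -- σ is large
  have hE1 : (3 : ℝ) ≤ Real.exp (mu * (6 * m - 4)) := by
    have h1 : (2 : ℝ) ≤ mu * (6 * m - 4) := by nlinarith
    have := Real.add_one_le_exp (mu * (6 * m - 4))
    linarith
  have hmu2 : (1 : ℝ) ≤ mu ^ 2 := by nlinarith
  have hσ3 : 3 ≤ σ := by
    rw [hσ]
    have h1 : Real.exp (mu * (6 * m - 4)) ≤ mu ^ 2 * Real.exp (mu * (6 * m - 4)) :=
      le_mul_of_one_le_left (by linarith) hmu2
    have h2 : mu ^ 2 * Real.exp (mu * (6 * m - 4))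
        ≤ lam * (mu ^ 2 * Real.exp (mu * (6 * m - 4))) :=
      le_mul_of_one_le_left (by nlinarith) hlam
    rw [mul_assoc]
    linarith
  have hσ0 : (0 : ℝ) < σ := by linarith
  have hσ1 : (0 : ℝ) ≤ σ - 1 := by linarith
  have hT2 : (0 : ℝ) < T ^ 2 := by positivity
  intro t ht b hb
  obtain ⟨ht0, ht4⟩ := ht
  obtain ⟨hb0, hb1⟩ := hb
  -- base positivity
  have hbase : ∀ s : ℝ, s < T / 4 → 0 < 1 - 4 * s / T := by
    intro s hs
    have : 4 * s / T < 1 := by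
      rw [div_lt_one hT0]; linarith
    linarith
  have hx : 0 < 1 - 4 * t / T := hbase t ht4
  have hx1 : 1 - 4 * t / T ≤ 1 := by
    have : 0 ≤ 4 * t / T := by positivity
    linarith
  -- inner derivative
  have hu : ∀ s : ℝ, HasDerivAt (fun u : ℝ => 1 - 4 * u / T) (-(4 / T)) s := by
    intro s
    have h4 : HasDerivAt (fun u : ℝ => 4 * u / T) (4 / T) s := by
      simpa [mul_comm, mul_div_assoc] using (hasDerivAt_id s).const_mul (4 / T)
    exact h4.const_sub 1
  -- first derivative on Iio (T/4)
  have hd1 : ∀ s : ℝ, s < T / 4 →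
      HasDerivAt (fun u => 1 + (1 - 4 * u / T) ^ σ)
        (-(4 / T) * σ * (1 - 4 * s / T) ^ (σ - 1)) s := by
    intro s hs
    exact ((hu s).rpow_const (Or.inl (hbase s hs).ne')).const_add 1
  -- deriv γ near t
  have hev : (deriv fun u => 1 + (1 - 4 * u / T) ^ σ) =ᶠ[nhds t]
      fun s => -(4 / T) * σ * (1 - 4 * s / T) ^ (σ - 1) := by
    filter_upwards [Iio_mem_nhds ht4] with s hs
    exact (hd1 s hs).deriv
  -- second derivative at t
  have hd2 : HasDerivAt (fun s => -(4 / T) * σ * (1 - 4 * s / T) ^ (σ - 1))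
      (-(4 / T) * σ * (-(4 / T) * (σ - 1) * (1 - 4 * t / T) ^ (σ - 1 - 1))) t := by
    exact ((hu t).rpow_const (Or.inl hx.ne')).const_mul (-(4 / T) * σ)
  have hD : deriv (deriv fun u => 1 + (1 - 4 * u / T) ^ σ) t
      = 16 * σ * (σ - 1) / T ^ 2 * (1 - 4 * t / T) ^ (σ - 2) := by
    rw [hev.deriv_eq, hd2.deriv, show σ - 1 - 1 = σ - 2 by ring]
    generalize (1 - 4 * t / T) ^ (σ - 2) = y
    field_simp
    ring
  have hxpn : 0 ≤ (1 - 4 * t / T) ^ (σ - 2) := Real.rpow_nonneg hx.le _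
  have hcoef : 0 ≤ 16 * σ * (σ - 1) / T ^ 2 :=
    div_nonneg (by nlinarith) hT2.le
  refine ⟨hD, ?_, ?_⟩
  · rw [hD]
    exact mul_nonneg hcoef hxpn
  · rw [hD]
    set A := Real.exp (mu * (6 * m + 6)) with hA
    set B := Real.exp (mu * (6 * m + b)) with hB
    set E := Real.exp (mu * (6 * m - 4)) with hEdef
    have hApos : 0 < A := Real.exp_pos _
    have hBpos : 0 < B := Real.exp_pos _
    have hEpos : 0 < E := Real.exp_pos _
    have hxp : (1 - 4 * t / T) ^ (σ - 2) ≤ 1 :=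
      Real.rpow_le_one hx.le hx1 (by linarith)
    have hγ1 : (1 : ℝ) ≤ 1 + (1 - 4 * t / T) ^ σ := by
      have : 0 ≤ (1 - 4 * t / T) ^ σ := Real.rpow_nonneg hx.le _
      linarith
    have hMA : 0 ≤ mu * A := mul_nonneg hmu0.le hApos.le
    set c := (1 - 4 * t / T) ^ (σ - 2) with hc
    -- step 1 : c * (μA - B) ≤ μA
    have hc1 : c * (mu * A - B) ≤ mu * A := by
      have h1 : c * (mu * A - B) ≤ c * (mu * A) :=
        mul_le_mul_of_nonneg_left (by linarith) hxpn
      have h2 : c * (mu * A) ≤ 1 * (mu * A) := mul_le_mul_of_nonneg_right hxp hMA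
      linarith
    have hfac : (0 : ℝ) ≤ 16 * lam * σ * (σ - 1) :=
      mul_nonneg (mul_nonneg (mul_nonneg (by norm_num) hlam0.le) hσ0.le) hσ1
    -- T²-cleared main bound on the left side
    have hcore : lam * (16 * σ * (σ - 1) * c) * (mu * A - B)
        ≤ 16 * lam * σ ^ 2 * (mu * A) := by
      have h3 := mul_le_mul_of_nonneg_left hc1 hfac
      have h4 : 16 * lam * σ * (σ - 1) * (mu * A) ≤ 16 * lam * (σ * σ) * (mu * A) := by
        nlinarith [mul_nonneg (mul_nonneg (mul_nonneg hlam0.le hσ0.le) hmu0.le) hApos.le]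
      calc lam * (16 * σ * (σ - 1) * c) * (mu * A - B)
          = 16 * lam * σ * (σ - 1) * (c * (mu * A - B)) := by ring
        _ ≤ 16 * lam * σ * (σ - 1) * (mu * A) := h3
        _ ≤ 16 * lam * (σ * σ) * (mu * A) := h4
        _ = 16 * lam * σ ^ 2 * (mu * A) := by ring
    -- key exponential inequality: 16 λ σ² μ A ≤ 8 λ³ μ² B³
    have hkey : 16 * lam * σ ^ 2 * (mu * A) ≤ 8 * lam ^ 3 * mu ^ 2 * B ^ 3 := by
      have hσ2 : σ ^ 2 = lam ^ 2 * mu ^ 4 * E ^ 2 := by rw [hσ]; ring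
      have hEA : E ^ 2 * A = Real.exp (mu * (18 * m - 2)) := by
        rw [hEdef, hA, sq, ← Real.exp_add, ← Real.exp_add]
        congr 1; ring
      have hB3 : B ^ 3 = Real.exp (mu * (18 * m + 3 * b)) := by
        rw [hB, pow_succ, sq, ← Real.exp_add, ← Real.exp_add]
        congr 1; ring
      have hmu3 : 2 * mu ^ 3 ≤ Real.exp (2 * mu) := two_mu_cubed_le_exp mu hmu
      have hstep : 2 * mu ^ 3 * (E ^ 2 * A) ≤ B ^ 3 := by
        rw [hEA, hB3]
        calc 2 * mu ^ 3 * Real.exp (mu * (18 * m - 2))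
            ≤ Real.exp (2 * mu) * Real.exp (mu * (18 * m - 2)) :=
              mul_le_mul_of_nonneg_right hmu3 (Real.exp_pos _).le
          _ = Real.exp (mu * (18 * m)) := by rw [← Real.exp_add]; congr 1; ring
          _ ≤ Real.exp (mu * (18 * m + 3 * b)) := by
              have hbmu : 0 ≤ mu * b := mul_nonneg hmu0.le hb0
              exact Real.exp_le_exp.mpr (by nlinarith [hbmu])
      have h8 : (0 : ℝ) ≤ 8 * lam ^ 3 * mu ^ 2 :=
        mul_nonneg (mul_nonneg (by norm_num) (pow_pos hlam0 3).le)
          (pow_pos hmu0 2).le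
      have h5 := mul_le_mul_of_nonneg_left hstep h8
      have e : 16 * lam * σ ^ 2 * (mu * A)
          = 8 * lam ^ 3 * mu ^ 2 * (2 * mu ^ 3 * (E ^ 2 * A)) := by
        rw [hσ2]; ring
      rw [e]; exact h5
    -- RHS lower bound
    have hRHS : 8 / T ^ 2 * lam ^ 3 * mu ^ 2 * B ^ 3
        ≤ 8 / T ^ 2 * lam ^ 3 * mu ^ 2 * ((1 + (1 - 4 * t / T) ^ σ) * B) ^ 3 := by
      have h8 : (0 : ℝ) ≤ 8 / T ^ 2 * lam ^ 3 * mu ^ 2 :=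
        mul_nonneg (mul_nonneg (div_nonneg (by norm_num) hT2.le) (pow_pos hlam0 3).le)
          (pow_pos hmu0 2).le
      apply mul_le_mul_of_nonneg_left _ h8
      apply pow_le_pow_left₀ hBpos.le
      nlinarith [mul_le_mul_of_nonneg_right hγ1 hBpos.le]
    have hu2 : (0 : ℝ) < 1 / T ^ 2 := by positivity
    calc lam * (16 * σ * (σ - 1) / T ^ 2 * c) * (mu * A - B)
        = 1 / T ^ 2 * (lam * (16 * σ * (σ - 1) * c) * (mu * A - B)) := by ring
      _ ≤ 1 / T ^ 2 * (16 * lam * σ ^ 2 * (mu * A)) :=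
          mul_le_mul_of_nonneg_left hcore hu2.le
      _ ≤ 1 / T ^ 2 * (8 * lam ^ 3 * mu ^ 2 * B ^ 3) :=
          mul_le_mul_of_nonneg_left hkey hu2.le
      _ = 8 / T ^ 2 * lam ^ 3 * mu ^ 2 * B ^ 3 := by ring
      _ ≤ 8 / T ^ 2 * lam ^ 3 * mu ^ 2 * ((1 + (1 - 4 * t / T) ^ σ) * B) ^ 3 := hRHS
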